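/- arXiv:2006.06213 — 4 statements merged into one kernel-verified Lean document; each statement's English description precedes it below -/
import Mathlib

section
/- Let α ∈ (0,1) be irrational. If α is badly approximable (i.e., its continued fraction digits are bounded by a constant C), then there is a constant C₁ = 3(C+1) such that for every integer n ≥ 1 and every subinterval I ⊂ [0,1) of length 1/n, there exists an integer j with 1 ≤ j ≤ C₁ n such that the fractional part {jα} lies in I. -/
/-- Complete quotients of the continued fraction of `α ∈ (0,1)`:
`cfQuot α 0 = 1/α`, and `cfQuot α (k+1) = 1/(cfQuot α k - ⌊cfQuot α k⌋)`.
The digit `a_{k+1}` is `⌊cfQuot α k⌋`. -/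
noncomputable def cfQuot (α : ℝ) : ℕ → ℝ
  | 0 => 1 / α
  | k + 1 => 1 / (cfQuot α k - ⌊cfQuot α k⌋)

/-- The `k`-th continued fraction digit `a_k` of `α ∈ (0,1)`, for `k ≥ 1`. -/
noncomputable def cfDigit (α : ℝ) (k : ℕ) : ℤ := ⌊cfQuot α (k - 1)⌋

/-- Numerators of the convergents: `p_0 = 0`, `p_1 = 1`,
`p_{k+2} = a_{k+2} p_{k+1} + p_k`. -/
noncomputable def cfP (α : ℝ) : ℕ → ℤ
  | 0 => 0
  | 1 => 1
  | k + 2 => cfDigit α (k + 2) * cfP α (k + 1) + cfP α k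

/-- Denominators of the convergents: `q_0 = 1`, `q_1 = a_1`,
`q_{k+2} = a_{k+2} q_{k+1} + q_k`. -/
noncomputable def cfQ (α : ℝ) : ℕ → ℤ
  | 0 => 1
  | 1 => cfDigit α 1
  | k + 2 => cfDigit α (k + 2) * cfQ α (k + 1) + cfQ α k

namespace CFAux

noncomputable def eta (α : ℝ) (k : ℕ) : ℝ := (cfQ α k) * α - (cfP α k)

noncomputable def sdel (α : ℝ) (k : ℕ) : ℝ := (-1 : ℝ)^k * eta α k

variable {α : ℝ}

lemma quot_irr_gt (hirr : Irrational α) (h0 : 0 < α) (h1 : α < 1) :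
    ∀ k, Irrational (cfQuot α k) ∧ 1 < cfQuot α k := by
  intro k
  induction k with
  | zero =>
    refine ⟨?_, ?_⟩
    · rw [cfQuot, one_div]; exact hirr.inv
    · rw [cfQuot, lt_div_iff₀ h0]; linarith
  | succ k ih =>
    obtain ⟨hi, hgt⟩ := ih
    have hne : cfQuot α k - ⌊cfQuot α k⌋ = Int.fract (cfQuot α k) := Int.self_sub_floor _
    have hfpos : 0 < Int.fract (cfQuot α k) := Int.fract_pos.mpr (hi.ne_int _)
    have hflt : Int.fract (cfQuot α k) < 1 := Int.fract_lt_one _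
    have hfi : Irrational (Int.fract (cfQuot α k)) := hne ▸ hi.sub_intCast _
    refine ⟨?_, ?_⟩
    · rw [cfQuot, one_div, hne]; exact hfi.inv
    · rw [cfQuot, hne]; exact one_lt_one_div hfpos hflt

lemma quot_irr (hirr : Irrational α) (h0 : 0 < α) (h1 : α < 1) (k : ℕ) :
    Irrational (cfQuot α k) := (quot_irr_gt hirr h0 h1 k).1

lemma quot_gt (hirr : Irrational α) (h0 : 0 < α) (h1 : α < 1) (k : ℕ) :
    1 < cfQuot α k := (quot_irr_gt hirr h0 h1 k).2

lemma quot_pos (hirr : Irrational α) (h0 : 0 < α) (h1 : α < 1) (k : ℕ) :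
    0 < cfQuot α k := lt_trans one_pos (quot_gt hirr h0 h1 k)

lemma digit_eq (k : ℕ) : cfDigit α (k + 1) = ⌊cfQuot α k⌋ := rfl

lemma digit_ge_one (hirr : Irrational α) (h0 : 0 < α) (h1 : α < 1) (k : ℕ) :
    1 ≤ cfDigit α (k + 1) := by
  rw [digit_eq]
  exact Int.le_floor.mpr (by exact_mod_cast (quot_gt hirr h0 h1 k).le)

lemma eta_rec (k : ℕ) :
    eta α (k + 2) = (cfDigit α (k + 2) : ℝ) * eta α (k + 1) + eta α k := by
  unfold eta
  rw [show cfP α (k+2) = cfDigit α (k + 2) * cfP α (k + 1) + cfP α k from rfl,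
      show cfQ α (k+2) = cfDigit α (k + 2) * cfQ α (k + 1) + cfQ α k from rfl]
  push_cast
  ring

lemma eta_zero : eta α 0 = α := by unfold eta; simp [cfQ, cfP]

lemma eta_succ (hirr : Irrational α) (h0 : 0 < α) (h1 : α < 1) :
    ∀ k, eta α (k + 1) = - eta α k / cfQuot α (k + 1) := by
  intro k
  induction k with
  | zero =>
    have h01 : eta α 1 = (cfDigit α 1 : ℝ) * α - 1 := by unfold eta; simp [cfQ, cfP]
    have hA1 : cfQuot α 1 = 1 / (cfQuot α 0 - ⌊cfQuot α 0⌋) := rfl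
    have hfpos : (0:ℝ) < cfQuot α 0 - ⌊cfQuot α 0⌋ := by
      rw [Int.self_sub_floor]
      exact Int.fract_pos.mpr ((quot_irr hirr h0 h1 0).ne_int _)
    have hA0 : cfQuot α 0 = 1 / α := rfl
    have hd : (cfDigit α 1 : ℝ) = ((⌊cfQuot α 0⌋ : ℤ) : ℝ) := by rw [digit_eq]
    rw [h01, eta_zero, hA1, hd]
    rw [hA0] at hfpos ⊢
    have hα : α ≠ 0 := ne_of_gt h0
    field_simp
    ring
  | succ k ih =>
    have hrec := eta_rec (α := α) k
    have hApos : (0:ℝ) < cfQuot α (k + 1) := quot_pos hirr h0 h1 (k+1)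
    have hfpos : (0:ℝ) < cfQuot α (k+1) - ⌊cfQuot α (k+1)⌋ := by
      rw [Int.self_sub_floor]
      exact Int.fract_pos.mpr ((quot_irr hirr h0 h1 (k+1)).ne_int _)
    have hA2 : cfQuot α (k + 2) = 1 / (cfQuot α (k+1) - ⌊cfQuot α (k+1)⌋) := rfl
    have hdig : (cfDigit α (k + 2) : ℝ) = ((⌊cfQuot α (k+1)⌋ : ℤ) : ℝ) := by rw [digit_eq]
    have hetak : eta α k = - eta α (k+1) * cfQuot α (k + 1) := by
      rw [ih]; field_simp
    rw [hrec, hetak, hA2, hdig]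
    field_simp
    ring

lemma sdel_zero : sdel α 0 = α := by unfold sdel; rw [eta_zero]; ring

lemma sdel_succ (hirr : Irrational α) (h0 : 0 < α) (h1 : α < 1) (k : ℕ) :
    sdel α (k + 1) = sdel α k / cfQuot α (k + 1) := by
  unfold sdel
  rw [eta_succ hirr h0 h1 k, pow_succ]
  ring

lemma sdel_pos (hirr : Irrational α) (h0 : 0 < α) (h1 : α < 1) (k : ℕ) :
    0 < sdel α k := by
  induction k with
  | zero => rw [sdel_zero]; exact h0
  | succ k ih => rw [sdel_succ hirr h0 h1 k]; exact div_pos ih (quot_pos hirr h0 h1 (k+1))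

lemma sdel_lt (hirr : Irrational α) (h0 : 0 < α) (h1 : α < 1) (k : ℕ) :
    sdel α (k + 1) < sdel α k := by
  rw [sdel_succ hirr h0 h1 k]
  exact div_lt_self (sdel_pos hirr h0 h1 k) (quot_gt hirr h0 h1 (k+1))

lemma sdel_le_alpha (hirr : Irrational α) (h0 : 0 < α) (h1 : α < 1) (k : ℕ) :
    sdel α k ≤ α := by
  induction k with
  | zero => rw [sdel_zero]
  | succ k ih => exact le_trans (sdel_lt hirr h0 h1 k).le ih

lemma sdel_lt_one (hirr : Irrational α) (h0 : 0 < α) (h1 : α < 1) (k : ℕ) :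
    sdel α k < 1 := lt_of_le_of_lt (sdel_le_alpha hirr h0 h1 k) h1

lemma sdel_eq_mul (hirr : Irrational α) (h0 : 0 < α) (h1 : α < 1) (k : ℕ) :
    sdel α k = cfQuot α (k + 1) * sdel α (k + 1) := by
  rw [sdel_succ hirr h0 h1 k,
    mul_div_cancel₀ _ (ne_of_gt (quot_pos hirr h0 h1 (k+1)))]

lemma eta_eq_sdel (k : ℕ) : eta α k = (-1 : ℝ)^k * sdel α k := by
  unfold sdel
  rw [← mul_assoc, ← mul_pow]
  norm_num

lemma cfQ_pos (hirr : Irrational α) (h0 : 0 < α) (h1 : α < 1) :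
    ∀ k, 1 ≤ cfQ α k := by
  intro k
  induction k using Nat.strong_induction_on with
  | _ k ih =>
    match k with
    | 0 => simp [cfQ]
    | 1 => rw [cfQ]; exact digit_ge_one hirr h0 h1 0
    | (k + 2) =>
      have h1' := ih (k+1) (by omega)
      have h0' := ih k (by omega)
      have hd := digit_ge_one hirr h0 h1 (k+1)
      rw [cfQ]
      nlinarith

lemma cfQ_mono (hirr : Irrational α) (h0 : 0 < α) (h1 : α < 1) (k : ℕ) :
    cfQ α k ≤ cfQ α (k + 1) := by
  match k with
  | 0 =>
    rw [show cfQ α 0 = 1 from rfl, show cfQ α 1 = cfDigit α 1 from rfl]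
    exact digit_ge_one hirr h0 h1 0
  | (k + 1) =>
    have h1' := cfQ_pos hirr h0 h1 (k+1)
    have h0' := cfQ_pos hirr h0 h1 k
    have hd := digit_ge_one hirr h0 h1 (k+1)
    rw [show cfQ α (k+2) = cfDigit α (k + 2) * cfQ α (k + 1) + cfQ α k from rfl]
    nlinarith

lemma cfQ_ge (hirr : Irrational α) (h0 : 0 < α) (h1 : α < 1) :
    ∀ k : ℕ, (k : ℤ) ≤ cfQ α k := by
  intro k
  induction k using Nat.strong_induction_on with
  | _ k ih =>
    match k with
    | 0 => simp [cfQ]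
    | 1 => rw [cfQ]; exact_mod_cast digit_ge_one hirr h0 h1 0
    | (k + 2) =>
      have h1' := ih (k+1) (by omega)
      have h0' := cfQ_pos hirr h0 h1 k
      have hq1 := cfQ_pos hirr h0 h1 (k+1)
      have hd := digit_ge_one hirr h0 h1 (k+1)
      have hm : cfQ α (k+1) ≤ cfDigit α (k + 2) * cfQ α (k + 1) :=
        le_mul_of_one_le_left (by linarith) hd
      rw [cfQ]
      push_cast at h1' ⊢
      linarith

lemma det_eq (k : ℕ) :
    cfQ α k * cfP α (k + 1) - cfP α k * cfQ α (k + 1) = (-1 : ℤ)^k := by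
  induction k with
  | zero => simp [cfQ, cfP]
  | succ k ih =>
    rw [show cfP α (k+2) = cfDigit α (k + 2) * cfP α (k + 1) + cfP α k from rfl,
        show cfQ α (k+2) = cfDigit α (k + 2) * cfQ α (k + 1) + cfQ α k from rfl,
        pow_succ]
    linear_combination (-1 : ℤ) * ih

lemma identity (hirr : Irrational α) (h0 : 0 < α) (h1 : α < 1) (k : ℕ) :
    (cfQ α (k+1) : ℝ) * sdel α k + (cfQ α k : ℝ) * sdel α (k + 1) = 1 := by
  have hd : ((cfQ α k : ℝ) * (cfP α (k+1) : ℝ) - (cfP α k : ℝ) * (cfQ α (k+1) : ℝ)) = (-1 : ℝ)^k := by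
    exact_mod_cast congrArg (fun z : ℤ => (z : ℝ)) (det_eq (α := α) k)
  have hsq : ((-1:ℝ))^k * (-1:ℝ)^k = 1 := by rw [← mul_pow]; norm_num
  unfold sdel eta
  rw [pow_succ]
  linear_combination ((-1:ℝ))^k * hd + hsq

lemma sdel_le_inv_q (hirr : Irrational α) (h0 : 0 < α) (h1 : α < 1) (k : ℕ) :
    sdel α k ≤ 1 / (cfQ α (k + 1) : ℝ) := by
  have hq1 : (0:ℝ) < (cfQ α (k+1) : ℝ) := by exact_mod_cast cfQ_pos hirr h0 h1 (k+1)
  have hq0 : (0:ℝ) < (cfQ α k : ℝ) := by exact_mod_cast cfQ_pos hirr h0 h1 k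
  have hid := identity hirr h0 h1 k
  have hs := sdel_pos hirr h0 h1 (k+1)
  rw [le_div_iff₀ hq1]
  nlinarith

lemma fract_shift (hirr : Irrational α) (h0 : 0 < α) (h1 : α < 1) (j₀ m k : ℕ) :
    Int.fract (((j₀ + m * (cfQ α k).toNat : ℕ) : ℝ) * α)
      = Int.fract (Int.fract ((j₀ : ℝ) * α) + (m : ℝ) * eta α k) := by
  have hq : (((cfQ α k).toNat : ℤ)) = cfQ α k :=
    Int.toNat_of_nonneg (by linarith [cfQ_pos hirr h0 h1 k])
  have hqR : (((cfQ α k).toNat : ℕ) : ℝ) = ((cfQ α k : ℤ) : ℝ) := by exact_mod_cast congrArg (fun z : ℤ => (z : ℝ)) hq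
  have harg : ((j₀ + m * (cfQ α k).toNat : ℕ) : ℝ) * α
      = (Int.fract ((j₀ : ℝ) * α) + (m : ℝ) * eta α k)
        + ((⌊(j₀ : ℝ) * α⌋ + (m : ℤ) * cfP α k : ℤ) : ℝ) := by
    rw [Int.fract]
    unfold eta
    push_cast [hqR]
    ring
  rw [harg, Int.fract_add_intCast]

lemma fract_mul_q (hirr : Irrational α) (h0 : 0 < α) (h1 : α < 1) (m k : ℕ) :
    Int.fract (((m * (cfQ α k).toNat : ℕ) : ℝ) * α) = Int.fract ((m : ℝ) * eta α k) := by
  have := fract_shift hirr h0 h1 0 m k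
  simpa using this

lemma covering (hirr : Irrational α) (h0 : 0 < α) (h1 : α < 1) :
    ∀ k : ℕ, ∀ y : ℝ, 0 ≤ y → y + sdel α k ≤ 1 →
      ∃ j : ℕ, 1 ≤ j ∧ (j : ℤ) ≤ cfQ α k + cfQ α (k + 1) - 1 ∧
        Int.fract ((j : ℝ) * α) ∈ Set.Icc y (y + sdel α k) := by
  intro k
  induction k with
  | zero =>
    intro y hy0 hy1
    rw [sdel_zero] at hy1 ⊢
    have hQ01 : cfQ α 0 + cfQ α 1 - 1 = ⌊cfQuot α 0⌋ := by
      rw [show cfQ α 0 = 1 from rfl, show cfQ α 1 = cfDigit α 1 from rfl, digit_eq]; ring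
    have hA0 : cfQuot α 0 = 1 / α := rfl
    have key : ∀ m : ℕ, 1 ≤ m → y ≤ m * α → (m : ℝ) * α ≤ y + α → (m : ℝ) * α < 1 →
        ∃ j : ℕ, 1 ≤ j ∧ (j : ℤ) ≤ cfQ α 0 + cfQ α 1 - 1 ∧
          Int.fract ((j : ℝ) * α) ∈ Set.Icc y (y + α) := by
      intro m hm1 hl hu hlt1
      refine ⟨m, hm1, ?_, ?_⟩
      · rw [hQ01]
        refine Int.le_floor.mpr ?_
        rw [hA0, le_div_iff₀ h0]
        push_cast
        linarith
      · rw [Int.fract_eq_self.mpr ⟨by positivity, hlt1⟩]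
        exact Set.mem_Icc.mpr ⟨hl, hu⟩
    by_cases hc : ⌈y / α⌉ ≤ 1
    · refine key 1 le_rfl ?_ (by push_cast; linarith) (by push_cast; linarith)
      have h2 : y / α ≤ 1 := le_trans (Int.le_ceil _) (by exact_mod_cast hc)
      rw [div_le_one h0] at h2
      simpa using h2
    · push_neg at hc
      set m : ℕ := (⌈y / α⌉).toNat with hm
      have hmc : ((m : ℕ) : ℤ) = ⌈y / α⌉ := by omega
      have hmR : ((m : ℕ) : ℝ) = ((⌈y / α⌉ : ℤ) : ℝ) := by exact_mod_cast congrArg (fun z : ℤ => (z : ℝ)) hmc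
      have hmu : (m : ℝ) * α < y + α := by
        have hmlt : (m : ℝ) < y / α + 1 := by rw [hmR]; exact Int.ceil_lt_add_one _
        have h3 := mul_lt_mul_of_pos_right hmlt h0
        rw [add_mul, div_mul_cancel₀ _ (ne_of_gt h0)] at h3
        linarith
      refine key m (by omega) ?_ hmu.le (by linarith)
      have hmge : y / α ≤ (m : ℝ) := by rw [hmR]; exact Int.le_ceil _
      exact (div_le_iff₀ h0).mp hmge
  | succ k ih =>
    intro y hy0 hy1
    have hAgt : 1 < cfQuot α (k+1) := quot_gt hirr h0 h1 (k+1)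
    have hAirr : Irrational (cfQuot α (k+1)) := quot_irr hirr h0 h1 (k+1)
    have hspos : 0 < sdel α (k+1) := sdel_pos hirr h0 h1 (k+1)
    have hs1 : sdel α (k+1) < 1 := sdel_lt_one hirr h0 h1 (k+1)
    have hSpos : 0 < sdel α k := sdel_pos hirr h0 h1 k
    have hSA : sdel α k = cfQuot α (k+1) * sdel α (k+1) := sdel_eq_mul hirr h0 h1 k
    have hsS : sdel α (k+1) < sdel α k := sdel_lt hirr h0 h1 k
    have hS1 : sdel α k < 1 := sdel_lt_one hirr h0 h1 k
    have hq1 : 1 ≤ cfQ α (k+1) := cfQ_pos hirr h0 h1 (k+1)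
    have hq0 : 1 ≤ cfQ α k := cfQ_pos hirr h0 h1 k
    have hq2r : cfQ α (k+1+1) = cfDigit α (k+2) * cfQ α (k+1) + cfQ α k := rfl
    have hq2 : 1 ≤ cfQ α (k+1+1) := cfQ_pos hirr h0 h1 (k+2)
    have hdig : cfDigit α (k+2) = ⌊cfQuot α (k+1)⌋ := digit_eq (k+1)
    have hd1 : 1 ≤ cfDigit α (k+2) := digit_ge_one hirr h0 h1 (k+1)
    have hqt : (((cfQ α (k+1)).toNat : ℕ) : ℤ) = cfQ α (k+1) := Int.toNat_of_nonneg (by linarith)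
    have hqtn : 1 ≤ (cfQ α (k+1)).toNat := by omega
    -- generic digit bound from a real bound
    have hled : ∀ w : ℤ, (w : ℝ) < cfQuot α (k+1) → w ≤ cfDigit α (k+2) := by
      intro w hw
      rw [hdig]
      exact Int.le_floor.mpr hw.le
    rcases Nat.even_or_odd (k+1) with hpar | hpar
    · -- EVEN : eta = + sdel
      have hetaval : eta α (k+1) = sdel α (k+1) := by
        rw [eta_eq_sdel (k+1), hpar.neg_one_pow, one_mul]
      by_cases hcase : 0 ≤ y + sdel α (k+1) - sdel α k
      · -- main case : use inductive hypothesis at shifted base point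
        obtain ⟨j₀, hj₀1, hj₀b, hzmem⟩ := ih (y + sdel α (k+1) - sdel α k) hcase (by linarith)
        rw [Set.mem_Icc] at hzmem
        set z := Int.fract ((j₀ : ℝ) * α) with hz
        have hzy : y + sdel α (k+1) - sdel α k ≤ z := hzmem.1
        have hzY : z ≤ y + sdel α (k+1) := by linarith [hzmem.2]
        have hz0 : 0 ≤ z := Int.fract_nonneg _
        set m : ℕ := (⌈(y - z) / sdel α (k+1)⌉).toNat with hm
        have hmgeu : (y - z) / sdel α (k+1) ≤ (m : ℝ) := by
          calc (y - z) / sdel α (k+1) ≤ (⌈(y - z) / sdel α (k+1)⌉ : ℝ) := Int.le_ceil _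
          _ ≤ ((m : ℕ) : ℝ) := by exact_mod_cast Int.self_le_toNat _
        have hlow : y ≤ z + m * sdel α (k+1) := by
          rw [div_le_iff₀ hspos] at hmgeu; linarith
        have hup : z + m * sdel α (k+1) ≤ y + sdel α (k+1) := by
          rcases Nat.eq_zero_or_pos m with hm0 | hmpos
          · rw [hm0]; push_cast; linarith
          · have hmc : ((m : ℕ) : ℤ) = ⌈(y - z) / sdel α (k+1)⌉ := by omega
            have h5 : ((m : ℕ) : ℝ) < (y - z) / sdel α (k+1) + 1 := by
              rw [show ((m : ℕ) : ℝ) = ((⌈(y - z) / sdel α (k+1)⌉ : ℤ) : ℝ) from by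
                exact_mod_cast congrArg (fun z : ℤ => (z : ℝ)) hmc]
              exact Int.ceil_lt_add_one _
            have h6 := mul_lt_mul_of_pos_right h5 hspos
            rw [add_mul, div_mul_cancel₀ _ (ne_of_gt hspos)] at h6
            linarith
        have hmd : (m : ℤ) ≤ cfDigit α (k+2) := by
          have hprod : (cfQuot α (k+1) - 1) * sdel α (k+1) = sdel α k - sdel α (k+1) := by
            rw [sub_mul, one_mul, ← hSA]
          have huA : (y - z) / sdel α (k+1) ≤ cfQuot α (k+1) - 1 := by
            rw [div_le_iff₀ hspos, hprod]
            linarith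
          have h8 : (⌈(y - z) / sdel α (k+1)⌉ : ℝ) < cfQuot α (k+1) :=
            lt_of_lt_of_le (Int.ceil_lt_add_one _) (by linarith)
          have h9 := hled _ h8
          omega
        refine ⟨j₀ + m * (cfQ α (k+1)).toNat, by omega, ?_, ?_⟩
        · push_cast [hqt]
          have h9 : (m : ℤ) * cfQ α (k+1) ≤ cfDigit α (k+2) * cfQ α (k+1) :=
            mul_le_mul_of_nonneg_right hmd (by linarith)
          rw [hq2r]
          push_cast at hj₀b
          linarith
        · rw [fract_shift hirr h0 h1 j₀ m (k+1), hetaval, ← hz]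
          have hP1 : z + (m : ℝ) * sdel α (k+1) ≤ 1 := le_trans hup hy1
          rcases lt_or_eq_of_le hP1 with hPlt | hPeq
          · rw [Int.fract_eq_self.mpr ⟨by linarith, hPlt⟩]
            exact Set.mem_Icc.mpr ⟨hlow, hup⟩
          · exfalso
            have hjne : (j₀ + m * (cfQ α (k+1)).toNat) ≠ 0 := by omega
            have hjirr : Irrational (Int.fract (((j₀ + m * (cfQ α (k+1)).toNat : ℕ) : ℝ) * α)) := by
              rw [← Int.self_sub_floor]
              exact (hirr.natCast_mul hjne).sub_intCast _
            rw [fract_shift hirr h0 h1 j₀ m (k+1), hetaval, ← hz, hPeq, Int.fract_one] at hjirr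
            exact (hjirr.ne_int 0) (by norm_num)
      · -- boundary case near 0 : use multiples of q_{k+1}
        push_neg at hcase
        by_cases hc2 : ⌈y / sdel α (k+1)⌉ ≤ 1
        · refine ⟨(cfQ α (k+1)).toNat, hqtn, ?_, ?_⟩
          · rw [hqt]; linarith
          · have hfr : Int.fract ((((cfQ α (k+1)).toNat : ℕ) : ℝ) * α) = sdel α (k+1) := by
              have h10 := fract_mul_q hirr h0 h1 1 (k+1)
              simp only [Nat.cast_one, one_mul, Nat.one_mul] at h10
              rw [h10, hetaval, Int.fract_eq_self.mpr ⟨hspos.le, hs1⟩]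
            rw [hfr]
            have hys : y ≤ sdel α (k+1) := by
              have h2 : y / sdel α (k+1) ≤ 1 := le_trans (Int.le_ceil _) (by exact_mod_cast hc2)
              rw [div_le_one hspos] at h2
              exact h2
            exact Set.mem_Icc.mpr ⟨hys, by linarith⟩
        · push_neg at hc2
          set m : ℕ := (⌈y / sdel α (k+1)⌉).toNat with hm
          have hmc : ((m : ℕ) : ℤ) = ⌈y / sdel α (k+1)⌉ := by omega
          have hm1 : 1 ≤ m := by omega
          have hmR : ((m : ℕ) : ℝ) = ((⌈y / sdel α (k+1)⌉ : ℤ) : ℝ) := by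
            exact_mod_cast congrArg (fun z : ℤ => (z : ℝ)) hmc
          have hyl : y ≤ m * sdel α (k+1) := by
            have hmge : y / sdel α (k+1) ≤ (m : ℝ) := by rw [hmR]; exact Int.le_ceil _
            exact (div_le_iff₀ hspos).mp hmge
          have hyu : (m : ℝ) * sdel α (k+1) < y + sdel α (k+1) := by
            have hmlt : (m : ℝ) < y / sdel α (k+1) + 1 := by
              rw [hmR]; exact Int.ceil_lt_add_one _
            have h3 := mul_lt_mul_of_pos_right hmlt hspos
            rw [add_mul, div_mul_cancel₀ _ (ne_of_gt hspos)] at h3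
            linarith
          have hms1 : (m : ℝ) * sdel α (k+1) < 1 := by linarith
          have hmd : (m : ℤ) ≤ cfDigit α (k+2) := by
            have hprod : (cfQuot α (k+1) - 1) * sdel α (k+1) = sdel α k - sdel α (k+1) := by
              rw [sub_mul, one_mul, ← hSA]
            have huA : y / sdel α (k+1) < cfQuot α (k+1) - 1 := by
              rw [div_lt_iff₀ hspos, hprod]
              linarith
            have h8 : ((m : ℤ) : ℝ) < cfQuot α (k+1) := by
              push_cast
              rw [hmR]
              calc (((⌈y / sdel α (k+1)⌉ : ℤ)) : ℝ) < y / sdel α (k+1) + 1 := Int.ceil_lt_add_one _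
              _ < cfQuot α (k+1) := by linarith
            exact hled _ h8
          refine ⟨m * (cfQ α (k+1)).toNat, by simpa using Nat.mul_le_mul hm1 hqtn, ?_, ?_⟩
          · push_cast [hqt]
            have h9 : (m : ℤ) * cfQ α (k+1) ≤ cfDigit α (k+2) * cfQ α (k+1) :=
              mul_le_mul_of_nonneg_right hmd (by linarith)
            rw [hq2r]
            linarith
          · rw [fract_mul_q hirr h0 h1 m (k+1), hetaval,
              Int.fract_eq_self.mpr ⟨by positivity, hms1⟩]
            exact Set.mem_Icc.mpr ⟨hyl, hyu.le⟩
    · -- ODD : eta = - sdel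
      have hetaval : eta α (k+1) = - sdel α (k+1) := by
        rw [eta_eq_sdel (k+1), hpar.neg_one_pow]; ring
      by_cases hcase : y + sdel α k ≤ 1
      · obtain ⟨j₀, hj₀1, hj₀b, hzmem⟩ := ih y hy0 hcase
        rw [Set.mem_Icc] at hzmem
        set z := Int.fract ((j₀ : ℝ) * α) with hz
        have hzy : y ≤ z := hzmem.1
        have hzY : z ≤ y + sdel α k := hzmem.2
        set m : ℕ := (⌊(z - y) / sdel α (k+1)⌋).toNat with hm
        have hfl0 : 0 ≤ ⌊(z - y) / sdel α (k+1)⌋ :=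
          Int.floor_nonneg.mpr (div_nonneg (by linarith) hspos.le)
        have hmc : ((m : ℕ) : ℤ) = ⌊(z - y) / sdel α (k+1)⌋ := by omega
        have hmR : ((m : ℕ) : ℝ) = ((⌊(z - y) / sdel α (k+1)⌋ : ℤ) : ℝ) := by
          exact_mod_cast congrArg (fun z : ℤ => (z : ℝ)) hmc
        have hmle : (m : ℝ) ≤ (z - y) / sdel α (k+1) := by rw [hmR]; exact Int.floor_le _
        have hmgt : (z - y) / sdel α (k+1) < (m : ℝ) + 1 := by
          rw [hmR]; exact Int.lt_floor_add_one _
        have hlow : y ≤ z - m * sdel α (k+1) := by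
          rw [le_div_iff₀ hspos] at hmle; linarith
        have hhigh : z - m * sdel α (k+1) < y + sdel α (k+1) := by
          rw [div_lt_iff₀ hspos] at hmgt; linarith
        have hmd : (m : ℤ) ≤ cfDigit α (k+2) := by
          have huA : (z - y) / sdel α (k+1) ≤ cfQuot α (k+1) := by
            rw [div_le_iff₀ hspos, ← hSA]; linarith
          have h8 : ((m : ℤ) : ℝ) < cfQuot α (k+1) + 1 := by
            push_cast
            rw [hmR]; linarith [Int.floor_le ((z - y) / sdel α (k+1))]
          rw [hdig]
          have := Int.floor_le_floor huA
          omega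
        refine ⟨j₀ + m * (cfQ α (k+1)).toNat, by omega, ?_, ?_⟩
        · push_cast [hqt]
          have h9 : (m : ℤ) * cfQ α (k+1) ≤ cfDigit α (k+2) * cfQ α (k+1) :=
            mul_le_mul_of_nonneg_right hmd (by linarith)
          rw [hq2r]
          push_cast at hj₀b
          linarith
        · rw [fract_shift hirr h0 h1 j₀ m (k+1), hetaval, ← hz]
          have harg : z + (m : ℝ) * (-(sdel α (k+1))) = z - m * sdel α (k+1) := by ring
          rw [harg, Int.fract_eq_self.mpr ⟨by linarith, by linarith⟩]
          exact Set.mem_Icc.mpr ⟨hlow, by linarith⟩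
      · push_neg at hcase
        by_cases hc2 : ⌈(1 - y) / sdel α (k+1)⌉ ≤ 1
        · refine ⟨(cfQ α (k+1)).toNat, hqtn, ?_, ?_⟩
          · rw [hqt]; linarith
          · have hfrs : Int.fract (sdel α (k+1)) = sdel α (k+1) :=
              Int.fract_eq_self.mpr ⟨hspos.le, hs1⟩
            have hfr : Int.fract ((((cfQ α (k+1)).toNat : ℕ) : ℝ) * α) = 1 - sdel α (k+1) := by
              have h10 := fract_mul_q hirr h0 h1 1 (k+1)
              simp only [Nat.cast_one, one_mul, Nat.one_mul] at h10
              rw [h10, hetaval, Int.fract_neg (by rw [hfrs]; exact ne_of_gt hspos), hfrs]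
            rw [hfr]
            have hys : 1 - y ≤ sdel α (k+1) := by
              have h2 : (1 - y) / sdel α (k+1) ≤ 1 := le_trans (Int.le_ceil _) (by exact_mod_cast hc2)
              rw [div_le_one hspos] at h2
              exact h2
            exact Set.mem_Icc.mpr ⟨by linarith, by linarith⟩
        · push_neg at hc2
          set m : ℕ := (⌈(1 - y) / sdel α (k+1)⌉ - 1).toNat with hm
          have hmc : ((m : ℕ) : ℤ) = ⌈(1 - y) / sdel α (k+1)⌉ - 1 := by omega
          have hm1 : 1 ≤ m := by omega
          have hmR : ((m : ℕ) : ℝ) = ((⌈(1 - y) / sdel α (k+1)⌉ : ℤ) : ℝ) - 1 := by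
            have := congrArg (fun z : ℤ => (z : ℝ)) hmc
            push_cast at this ⊢
            linarith
          have hmlt : (m : ℝ) < (1 - y) / sdel α (k+1) := by
            rw [hmR]
            have := Int.ceil_lt_add_one ((1 - y) / sdel α (k+1))
            linarith
          have hmge : (1 - y) / sdel α (k+1) ≤ (m : ℝ) + 1 := by
            rw [hmR]
            have := Int.le_ceil ((1 - y) / sdel α (k+1))
            linarith
          have hlow : y ≤ 1 - m * sdel α (k+1) := by
            have h3 := mul_lt_mul_of_pos_right hmlt hspos
            rw [div_mul_cancel₀ _ (ne_of_gt hspos)] at h3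
            linarith
          have hup : 1 - m * sdel α (k+1) ≤ y + sdel α (k+1) := by
            have h3 := mul_le_mul_of_nonneg_right hmge hspos.le
            rw [div_mul_cancel₀ _ (ne_of_gt hspos), add_mul, one_mul] at h3
            linarith
          have hms1 : (m : ℝ) * sdel α (k+1) < 1 := by
            have h3 := mul_lt_mul_of_pos_right hmlt hspos
            rw [div_mul_cancel₀ _ (ne_of_gt hspos)] at h3
            linarith
          have hms0 : 0 < (m : ℝ) * sdel α (k+1) := by positivity
          have hmd : (m : ℤ) ≤ cfDigit α (k+2) := by
            have htA : (1 - y) / sdel α (k+1) < cfQuot α (k+1) := by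
              rw [div_lt_iff₀ hspos, ← hSA]; linarith
            exact hled _ (by push_cast; linarith)
          refine ⟨m * (cfQ α (k+1)).toNat, by simpa using Nat.mul_le_mul hm1 hqtn, ?_, ?_⟩
          · push_cast [hqt]
            have h9 : (m : ℤ) * cfQ α (k+1) ≤ cfDigit α (k+2) * cfQ α (k+1) :=
              mul_le_mul_of_nonneg_right hmd (by linarith)
            rw [hq2r]
            linarith
          · rw [fract_mul_q hirr h0 h1 m (k+1), hetaval]
            have harg : (m : ℝ) * (-(sdel α (k+1))) = -((m : ℝ) * sdel α (k+1)) := by ring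
            have hfrm : Int.fract ((m : ℝ) * sdel α (k+1)) = (m : ℝ) * sdel α (k+1) :=
              Int.fract_eq_self.mpr ⟨hms0.le, hms1⟩
            rw [harg, Int.fract_neg (by rw [hfrm]; exact ne_of_gt hms0), hfrm]
            exact Set.mem_Icc.mpr ⟨hlow, hup⟩

end CFAux

/-- If `α ∈ (0,1)` is irrational and badly approximable, with all continued fraction digits
bounded by `C`, then with `C₁ = 3(C+1)`: for every `n ≥ 1` and every subinterval
`[x, x + 1/n) ⊆ [0,1)` of length `1/n`, there exists `1 ≤ j ≤ C₁ n` with `{jα}` in the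
interval. -/
theorem stmt_1 (α : ℝ) (hirr : Irrational α) (h0 : 0 < α) (h1 : α < 1) (C : ℤ)
    (hbad : ∀ k : ℕ, 1 ≤ k → cfDigit α k ≤ C) :
    ∀ n : ℕ, 1 ≤ n → ∀ x : ℝ, 0 ≤ x → x + 1 / n ≤ 1 →
      ∃ j : ℕ, 1 ≤ j ∧ (j : ℤ) ≤ 3 * (C + 1) * n ∧
        Int.fract ((j : ℝ) * α) ∈ Set.Ico x (x + 1 / n) := by
  intro n hn x hx0 hx1
  have hC1 : 1 ≤ C := le_trans (CFAux.digit_ge_one hirr h0 h1 0) (hbad 1 le_rfl)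
  -- find k with q_k ≤ n < q_{k+1}
  have hex : ∃ k : ℕ, (n : ℤ) < cfQ α k := by
    refine ⟨n + 1, ?_⟩
    have := CFAux.cfQ_ge hirr h0 h1 (n + 1)
    push_cast at this
    omega
  classical
  have hk₀ : (n : ℤ) < cfQ α (Nat.find hex) := Nat.find_spec hex
  have hk₀ne : Nat.find hex ≠ 0 := by
    intro h
    rw [h, show cfQ α 0 = 1 from rfl] at hk₀
    omega
  obtain ⟨k, hk⟩ : ∃ k, Nat.find hex = k + 1 := ⟨Nat.find hex - 1, by omega⟩
  rw [hk] at hk₀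
  have hqkn : cfQ α k ≤ (n : ℤ) := by
    have := Nat.find_min hex (m := k) (by omega)
    omega
  -- q_{k+1} ≤ (C+1) q_k
  have hq0 : 1 ≤ cfQ α k := CFAux.cfQ_pos hirr h0 h1 k
  have hq1 : 1 ≤ cfQ α (k + 1) := CFAux.cfQ_pos hirr h0 h1 (k + 1)
  have hqb : cfQ α (k + 1) ≤ (C + 1) * cfQ α k := by
    match k with
    | 0 =>
      rw [show cfQ α 1 = cfDigit α 1 from rfl, show cfQ α 0 = 1 from rfl]
      have := hbad 1 le_rfl
      linarith
    | (m + 1) =>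
      rw [show cfQ α (m + 2) = cfDigit α (m + 2) * cfQ α (m + 1) + cfQ α m from rfl]
      have hd : cfDigit α (m + 2) ≤ C := hbad (m + 2) (by omega)
      have hmono : cfQ α m ≤ cfQ α (m + 1) := CFAux.cfQ_mono hirr h0 h1 m
      have hqm1 : (0 : ℤ) ≤ cfQ α (m + 1) := by linarith [CFAux.cfQ_pos hirr h0 h1 (m + 1)]
      nlinarith
  -- sdel bound
  have hnpos : (0 : ℝ) < (n : ℝ) := by exact_mod_cast hn
  have hqR : ((n : ℝ)) < (cfQ α (k + 1) : ℝ) := by exact_mod_cast hk₀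
  have hsd : CFAux.sdel α k < 1 / (n : ℝ) := by
    refine lt_of_le_of_lt (CFAux.sdel_le_inv_q hirr h0 h1 k) ?_
    exact one_div_lt_one_div_of_lt hnpos hqR
  have hsd0 : 0 < CFAux.sdel α k := CFAux.sdel_pos hirr h0 h1 k
  have hx2 : x + CFAux.sdel α k ≤ 1 := by
    have : (0:ℝ) < 1 / n := by positivity
    linarith
  obtain ⟨j, hj1, hjb, hmem⟩ := CFAux.covering hirr h0 h1 k x hx0 hx2
  rw [Set.mem_Icc] at hmem
  refine ⟨j, hj1, ?_, Set.mem_Ico.mpr ⟨hmem.1, by linarith [hmem.2]⟩⟩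
  -- index bound
  have h2 : (C + 1) * cfQ α k ≤ (C + 1) * (n : ℤ) :=
    mul_le_mul_of_nonneg_left hqkn (by linarith)
  have h3 : (C + 2) * (n : ℤ) ≤ 3 * (C + 1) * (n : ℤ) := by nlinarith
  have hnz : (1 : ℤ) ≤ (n : ℤ) := by exact_mod_cast hn
  linarith [hjb]
end

section
/- Let α ∈ (0,1) be irrational and suppose there is a constant C₁ such that for every integer n ≥ 1 and every subinterval I ⊂ [0,1) of length 1/n, there exists 1 ≤ j ≤ C₁ n with {jα} ∈ I. Then α is badly approximable: every continued fraction digit of α is less than 9C₁. -/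
noncomputable def cfT (α : ℝ) : ℕ → ℝ
  | 0 => α
  | k + 1 => cfT α k * Int.fract (cfQuot α k)

lemma cfQuot_spec (α : ℝ) (hirr : Irrational α) (h0 : 0 < α) (h1 : α < 1) :
    ∀ k, Irrational (cfQuot α k) ∧ 1 < cfQuot α k := by
  intro k
  induction k with
  | zero =>
    refine ⟨?_, one_lt_one_div h0 h1⟩
    rw [cfQuot, one_div]
    exact hirr.inv
  | succ k ih =>
    obtain ⟨hi, hlt⟩ := ih
    have hfr : Irrational (Int.fract (cfQuot α k)) := by
      rw [← Int.self_sub_floor]; exact hi.sub_intCast ⌊cfQuot α k⌋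
    have hpos : 0 < Int.fract (cfQuot α k) :=
      Int.fract_pos.mpr (fun h => hi.ne_int _ h)
    have hlt1 : Int.fract (cfQuot α k) < 1 := Int.fract_lt_one _
    constructor
    · rw [cfQuot, Int.self_sub_floor (cfQuot α k), one_div]
      exact hfr.inv
    · rw [cfQuot, Int.self_sub_floor (cfQuot α k)]
      exact one_lt_one_div hpos hlt1


section facts
variable {α : ℝ} (hirr : Irrational α) (h0 : 0 < α) (h1 : α < 1)
include hirr h0 h1

lemma cfT_pos : ∀ k, 0 < cfT α k := by
  intro k
  induction k with
  | zero => exact h0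
  | succ k ih =>
    rw [cfT]
    exact mul_pos ih (Int.fract_pos.mpr (fun h => ((cfQuot_spec α hirr h0 h1 k).1).ne_int _ h))

lemma cfT_key : ∀ k, cfT α (k + 1) * cfQuot α (k + 1) = cfT α k := by
  intro k
  have hfr : Int.fract (cfQuot α k) ≠ 0 :=
    ne_of_gt (Int.fract_pos.mpr (fun h => ((cfQuot_spec α hirr h0 h1 k).1).ne_int _ h))
  rw [cfT, cfQuot, Int.self_sub_floor, mul_assoc, mul_one_div, div_self hfr, mul_one]

lemma cfDigit_pos : ∀ k, 1 ≤ k → 1 ≤ cfDigit α k := by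
  intro k hk
  have := (cfQuot_spec α hirr h0 h1 (k - 1)).2
  rw [cfDigit]
  exact Int.le_floor.mpr (by exact_mod_cast this.le)

lemma cfQ_pos : ∀ k, 1 ≤ cfQ α k := by
  intro k
  induction k using Nat.twoStepInduction with
  | zero => rw [cfQ]
  | one => rw [cfQ]; exact cfDigit_pos hirr h0 h1 1 le_rfl
  | more k ih1 ih2 =>
    rw [cfQ]
    have hd := cfDigit_pos hirr h0 h1 (k + 2) (by omega)
    nlinarith

lemma cfT_step : ∀ k, cfT α (k + 2) = cfT α k - cfDigit α (k + 2) * cfT α (k + 1) := by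
  intro k
  have h2 : cfDigit α (k + 2) = ⌊cfQuot α (k + 1)⌋ := by simp [cfDigit]
  have hk := cfT_key hirr h0 h1 k
  rw [show cfT α (k+2) = cfT α (k+1) * Int.fract (cfQuot α (k+1)) from rfl,
    Int.fract, h2, mul_sub]
  linear_combination hk

lemma cfSign : ∀ k, (cfQ α k : ℝ) * α - (cfP α k : ℝ) = (-1) ^ k * cfT α k := by
  have hα : α ≠ 0 := ne_of_gt h0
  intro k
  induction k using Nat.twoStepInduction with
  | zero => simp [cfQ, cfP, cfT]
  | one =>
    rw [cfQ, cfP, cfDigit]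
    show (⌊cfQuot α (1-1)⌋ : ℝ) * α - ((1:ℤ):ℝ) = (-1) ^ 1 * (cfT α 0 * Int.fract (cfQuot α 0))
    norm_num
    rw [show cfT α 0 = α from rfl]
    rw [Int.fract, show cfQuot α 0 = 1/α from rfl]
    field_simp
    ring
  | more k ih1 ih2 =>
    have hstep := cfT_step hirr h0 h1 k
    rw [cfQ, cfP]
    push_cast
    linear_combination (cfDigit α (k+2) : ℝ) * ih2 + ih1 - (-1 : ℝ) ^ k * hstep

lemma cfUnit : ∀ k, (cfQ α (k + 1) : ℝ) * cfT α k + (cfQ α k : ℝ) * cfT α (k + 1) = 1 := by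
  have hα : α ≠ 0 := ne_of_gt h0
  intro k
  induction k with
  | zero =>
    rw [cfQ, cfQ, cfDigit]
    show (⌊cfQuot α (1-1)⌋ : ℝ) * cfT α 0 + (1:ℤ) * cfT α (0+1) = 1
    norm_num
    rw [show cfT α 1 = cfT α 0 * Int.fract (cfQuot α 0) from rfl, Int.fract,
      show cfQuot α 0 = 1/α from rfl, show cfT α 0 = α from rfl]
    field_simp
    ring
  | succ k ih =>
    have hstep := cfT_step hirr h0 h1 k
    rw [cfQ]
    push_cast
    linear_combination ih + (cfQ α (k+1) : ℝ) * hstep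

end facts

lemma gap_lemma (N : ℕ) (hN : 1 ≤ N) (S : Finset ℝ) (h0S : (0:ℝ) ∈ S)
    (hcard : (S.filter (fun s => s < 1)).card ≤ N) :
    ∃ u ∈ S, u < 1 ∧ ∀ s ∈ S, s ∉ Set.Ioo u (u + 1 / N) := by
  by_contra hcon
  push_neg at hcon
  have H : ∀ u : ℝ, ∃ s : ℝ, (u ∈ S ∧ u < 1) → (s ∈ S ∧ s ∈ Set.Ioo u (u + 1 / N)) := by
    intro u
    by_cases hu : u ∈ S ∧ u < 1
    · obtain ⟨s, hs1, hs2⟩ := hcon u hu.1 hu.2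
      exact ⟨s, fun _ => ⟨hs1, hs2⟩⟩
    · exact ⟨0, fun hc => absurd hc hu⟩
  choose F hF using H
  set f : ℕ → ℝ := fun i => F^[i] 0 with hf
  have hfs : ∀ i, f (i + 1) = F (f i) := by
    intro i; simp [hf, Function.iterate_succ_apply']
  have hNpos : (0:ℝ) < N := by exact_mod_cast hN
  have inv : ∀ i, i ≤ N → f i ∈ S ∧ f i ≤ (i : ℝ) / N ∧ (1 ≤ i → f i < (i : ℝ) / N) := by
    intro i
    induction i with
    | zero => intro _; exact ⟨by simpa [hf] using h0S, by simp [hf], by omega⟩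
    | succ i ih =>
      intro hi
      obtain ⟨h1', h2', _⟩ := ih (by omega)
      have hiN : (i : ℝ) + 1 ≤ (N : ℝ) := by exact_mod_cast hi
      have hlt1 : f i < 1 :=
        lt_of_le_of_lt h2' (by rw [div_lt_one hNpos]; linarith)
      have := hF (f i) ⟨h1', hlt1⟩
      rw [← hfs i] at this
      obtain ⟨hm, hlo, hhi⟩ := this
      refine ⟨hm, ?_, fun _ => ?_⟩ <;>
      · have : f (i + 1) < (i : ℝ) / N + 1 / N := lt_of_lt_of_le hhi (by linarith)
        push_cast
        rw [add_div] at *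
        linarith
  have mono : ∀ i, i ≤ N → ∀ j, j < i → f j < f i := by
    intro i
    induction i with
    | zero => omega
    | succ i ih =>
      intro hi j hj
      have hstep : f i < f (i + 1) := by
        obtain ⟨h1', h2', _⟩ := inv i (by omega)
        have hiN : (i : ℝ) + 1 ≤ (N : ℝ) := by exact_mod_cast hi
        have hlt1 : f i < 1 :=
          lt_of_le_of_lt h2' (by rw [div_lt_one hNpos]; linarith)
        have := hF (f i) ⟨h1', hlt1⟩
        rw [← hfs i] at this
        exact this.2.1
      rcases Nat.lt_or_ge j i with h | h
      · exact lt_trans (ih (by omega) j h) hstep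
      · have : j = i := by omega
        rw [this]; exact hstep
  have hmaps : ∀ i ∈ Finset.range (N + 1), f i ∈ S.filter (fun s => s < 1) := by
    intro i hi
    rw [Finset.mem_range] at hi
    obtain ⟨h1', h2', h3'⟩ := inv i (by omega)
    rw [Finset.mem_filter]
    refine ⟨h1', ?_⟩
    rcases Nat.eq_zero_or_pos i with h | h
    · subst h; simpa [hf] using one_pos
    · exact lt_of_lt_of_le (h3' h) (by
        rw [div_le_one hNpos]; exact_mod_cast Nat.lt_succ_iff.mp hi)
  have hinj : Set.InjOn f (Finset.range (N + 1)) := by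
    intro a ha b hb hab
    simp only [Finset.coe_range, Set.mem_Iio] at ha hb
    by_contra hne
    rcases Nat.lt_or_ge a b with h | h
    · exact absurd hab (ne_of_lt (mono b (by omega) a h))
    · have : b < a := by omega
      exact absurd hab.symm (ne_of_lt (mono a (by omega) b this))
  have := Finset.card_le_card_of_injOn f hmaps hinj
  rw [Finset.card_range] at this
  omega


set_option maxHeartbeats 1000000 in
/-- If `α ∈ (0,1)` is irrational and there is `C₁` such that for every `n ≥ 1` and every
subinterval `[x, x+1/n) ⊆ [0,1)` of length `1/n` there is `1 ≤ j ≤ C₁ n` with `{jα}` in the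
interval, then `α` is badly approximable: every continued fraction digit is less than `9C₁`. -/
theorem stmt_2 (α : ℝ) (hirr : Irrational α) (h0 : 0 < α) (h1 : α < 1) (C₁ : ℕ)
    (hA : ∀ n : ℕ, 1 ≤ n → ∀ x : ℝ, 0 ≤ x → x + 1 / n ≤ 1 →
      ∃ j : ℕ, 1 ≤ j ∧ j ≤ C₁ * n ∧
        Int.fract ((j : ℝ) * α) ∈ Set.Ico x (x + 1 / n)) :
    ∀ k : ℕ, 1 ≤ k → cfDigit α k < 9 * (C₁ : ℤ) := by
  have hC : 1 ≤ C₁ := by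
    obtain ⟨j, hj1, hj2, _⟩ := hA 1 le_rfl 0 le_rfl (by norm_num)
    omega
  intro k hk
  by_contra hcon
  push_neg at hcon
  obtain ⟨K, rfl⟩ : ∃ K, k = K + 1 := ⟨k - 1, by omega⟩
  have hQ1 : 1 ≤ cfQ α K := cfQ_pos hirr h0 h1 K
  set N : ℕ := (cfQ α K).toNat with hN
  have hNQ : (N : ℤ) = cfQ α K := Int.toNat_of_nonneg (by omega)
  have hN1 : 1 ≤ N := by omega
  have hNr : (0:ℝ) < (N:ℝ) := by exact_mod_cast hN1
  have hθpos : 0 < cfT α K := cfT_pos hirr h0 h1 K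
  -- q_{K+1} ≥ 9 C₁ N
  have hq : (9 * (C₁:ℤ) * N) ≤ cfQ α (K + 1) := by
    cases K with
    | zero =>
      have hQ0 : cfQ α 0 = 1 := by rw [cfQ]
      have hN1' : (N:ℤ) = 1 := by rw [hNQ, hQ0]
      have hq1 : cfQ α 1 = cfDigit α 1 := by rw [cfQ]
      rw [hN1', hq1]
      linarith [hcon]
    | succ K' =>
      show 9 * (C₁:ℤ) * N ≤ cfQ α (K' + 2)
      rw [cfQ, hNQ]
      have h1' : 1 ≤ cfQ α K' := cfQ_pos hirr h0 h1 K'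
      have h2' : 1 ≤ cfQ α (K' + 1) := cfQ_pos hirr h0 h1 (K' + 1)
      have hcon' : 9 * (C₁:ℤ) ≤ cfDigit α (K' + 2) := hcon
      have := mul_le_mul_of_nonneg_right hcon' (by omega : (0:ℤ) ≤ cfQ α (K' + 1))
      linarith
  -- θ * (9 C₁ N) < 1
  have hunit := cfUnit hirr h0 h1 K
  have hT1pos : 0 < cfT α (K + 1) := cfT_pos hirr h0 h1 (K + 1)
  have hθsmall : cfT α K * (9 * (C₁:ℝ) * N) < 1 := by
    have hq' : (9 * (C₁:ℝ) * N) ≤ (cfQ α (K+1) : ℝ) := by exact_mod_cast hq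
    have hQr : (1:ℝ) ≤ (cfQ α K : ℝ) := by exact_mod_cast hQ1
    have e1 : cfT α K * (9 * (C₁:ℝ) * N) ≤ cfT α K * (cfQ α (K+1) : ℝ) :=
      mul_le_mul_of_nonneg_left hq' hθpos.le
    have e2 : (1:ℝ) * cfT α (K+1) ≤ (cfQ α K : ℝ) * cfT α (K+1) :=
      mul_le_mul_of_nonneg_right hQr hT1pos.le
    nlinarith [hunit, e1, e2, hT1pos]
  -- the finite set of points
  set S : Finset ℝ :=
    insert 1 ((Finset.range N).image (fun r : ℕ => Int.fract ((r:ℝ) * α))) with hS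
  have h0S : (0:ℝ) ∈ S := by
    apply Finset.mem_insert_of_mem
    exact Finset.mem_image.mpr ⟨0, Finset.mem_range.mpr (by omega), by simp⟩
  have hcard : (S.filter (fun s => s < 1)).card ≤ N := by
    have hsub : S.filter (fun s => s < 1) ⊆
        (Finset.range N).image (fun r : ℕ => Int.fract ((r:ℝ) * α)) := by
      intro s hs
      rw [Finset.mem_filter, hS, Finset.mem_insert] at hs
      rcases hs.1 with h | h
      · exact absurd (h ▸ hs.2) (lt_irrefl 1)
      · exact h
    calc (S.filter (fun s => s < 1)).card
        ≤ ((Finset.range N).image (fun r : ℕ => Int.fract ((r:ℝ) * α))).card :=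
          Finset.card_le_card hsub
      _ ≤ (Finset.range N).card := Finset.card_image_le
      _ = N := Finset.card_range N
  obtain ⟨u, huS, hu1, hgap⟩ := gap_lemma N hN1 S h0S hcard
  have hu0 : 0 ≤ u := by
    rw [hS, Finset.mem_insert] at huS
    rcases huS with h | h
    · rw [h]; norm_num
    · obtain ⟨r, _, hr⟩ := Finset.mem_image.mp h
      rw [← hr]; exact Int.fract_nonneg _
  have huN : u + 1 / (N:ℝ) ≤ 1 := by
    by_contra h
    push_neg at h
    exact hgap 1 (Finset.mem_insert_self 1 _) ⟨hu1, h⟩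
  -- apply hypothesis A to the middle third of the gap
  have h3N : ((3 * N : ℕ) : ℝ) = 3 * N := by push_cast; ring
  have h3Npos : (0:ℝ) < 3 * N := by linarith
  have h13 : 1 / (3 * (N:ℝ)) + 1 / (3 * (N:ℝ)) + 1 / (3 * (N:ℝ)) = 1 / (N:ℝ) := by
    field_simp
    norm_num
  have hinv3 : (0:ℝ) < 1 / (3 * (N:ℝ)) := by positivity
  have h1N : 1 / (N:ℝ) ≤ 1 := by
    rw [div_le_one hNr]; exact_mod_cast hN1
  obtain ⟨j, hj1, hj2, hjmem⟩ := hA (3 * N) (by omega) (u + 1 / (3 * N))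
    (by positivity)
    (by rw [h3N]; linarith)
  rw [h3N] at hjmem
  -- decompose j = N * m + r
  set m : ℕ := j / N with hm
  set r : ℕ := j % N with hr
  have hjdec : j = N * m + r := (Nat.div_add_mod j N).symm
  have hrN : r < N := Nat.mod_lt _ (by omega)
  have hmC : m ≤ 3 * C₁ := by
    have hlt : j < (3 * C₁ + 1) * N := by nlinarith [hj2, hN1]
    have := (Nat.div_lt_iff_lt_mul (by omega : 0 < N)).mpr hlt
    omega
  -- the error term
  have hsign := cfSign hirr h0 h1 K
  have habs : |(cfQ α K : ℝ) * α - (cfP α K : ℝ)| = cfT α K := by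
    rw [hsign, abs_mul, abs_pow, abs_neg, abs_one, one_pow, one_mul, abs_of_pos hθpos]
  set e : ℝ := (cfQ α K : ℝ) * α - (cfP α K : ℝ) with he
  set y : ℝ := Int.fract ((r:ℝ) * α) with hy
  set δ : ℝ := (m:ℝ) * e with hδdef
  set z : ℝ := Int.fract ((j:ℝ) * α) with hz
  have hdecomp : z = Int.fract (y + δ) := by
    have h1' : (j:ℝ) * α = (r:ℝ) * α + δ + ((m * cfP α K : ℤ) : ℝ) := by
      rw [hjdec, hδdef, he]
      have hNQ' : ((N:ℕ):ℝ) = (cfQ α K : ℝ) := by exact_mod_cast hNQ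
      push_cast
      rw [hNQ']
      ring
    rw [hz, h1', Int.fract_add_intCast]
    have h2' : (r:ℝ) * α + δ = (y + δ) + ((⌊(r:ℝ) * α⌋ : ℤ) : ℝ) := by
      rw [hy, Int.fract]; ring
    rw [h2', Int.fract_add_intCast]
  have hy0 : 0 ≤ y := Int.fract_nonneg _
  have hy1 : y < 1 := Int.fract_lt_one _
  have hyS : y ∈ S := by
    rw [hS]
    exact Finset.mem_insert_of_mem
      (Finset.mem_image.mpr ⟨r, Finset.mem_range.mpr hrN, rfl⟩)
  have hδbound : |δ| < 1 / (3 * N) := by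
    rw [hδdef, abs_mul, Nat.abs_cast, habs]
    have hb1 : (m:ℝ) * cfT α K ≤ 3 * C₁ * cfT α K := by
      have : (m:ℝ) ≤ 3 * C₁ := by exact_mod_cast hmC
      nlinarith
    have hb2 : 3 * (C₁:ℝ) * cfT α K < 1 / (3 * N) := by
      rw [lt_div_iff₀ h3Npos]
      calc 3 * (C₁:ℝ) * cfT α K * (3 * N) = cfT α K * (9 * C₁ * N) := by ring
        _ < 1 := hθsmall
    linarith
  obtain ⟨hzlo, hzhi⟩ := hjmem
  have hδlo : -(1 / (3 * (N:ℝ))) < δ := by linarith [(abs_lt.mp hδbound).1]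
  have hδhi : δ < 1 / (3 * (N:ℝ)) := (abs_lt.mp hδbound).2
  -- case analysis on y + δ
  clear_value e y δ z
  rcases lt_or_ge (y + δ) 0 with hcase | hcase
  · -- wraps below 0 : z = y + δ + 1 close to 1
    have hz1 : z = y + δ + 1 := by
      have hfe : Int.fract (y + δ + 1) = y + δ + 1 :=
        Int.fract_eq_self.mpr ⟨by linarith, by linarith⟩
      have hshift : Int.fract (y + δ) = Int.fract (y + δ + 1) := by
        rw [show y + δ + (1:ℝ) = y + δ + ((1:ℤ):ℝ) by norm_num, Int.fract_add_intCast]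
      rw [hdecomp, hshift, hfe]
    linarith
  · rcases lt_or_ge (y + δ) 1 with hcase2 | hcase2
    · -- no wrap : y is in the gap, contradiction
      have hz1 : z = y + δ := by
        rw [hdecomp]; exact Int.fract_eq_self.mpr ⟨hcase, hcase2⟩
      exact hgap y hyS ⟨by linarith, by linarith⟩
    · -- wraps above 1 : z close to 0
      have hz1 : z = y + δ - 1 := by
        have hfe : Int.fract (y + δ - 1) = y + δ - 1 :=
          Int.fract_eq_self.mpr ⟨by linarith, by linarith⟩
        have hshift : Int.fract (y + δ) = Int.fract (y + δ - 1) := by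
          rw [show y + δ - (1:ℝ) = y + δ + ((-1:ℤ):ℝ) by push_cast; ring,
            Int.fract_add_intCast]
        rw [hdecomp, hshift, hfe]
      linarith
end

section
/- Let m ≥ 1 and let α_1, ..., α_m be real algebraic integers lying in a real algebraic number field of degree m+1 such that 1, α_1, ..., α_m are linearly independent over ℚ. Then there exists a constant C > 0 such that for every nonzero integer vector (n_1, ..., n_m) ∈ ℤ^m, the distance from n_1α_1 + ... + n_mα_m to the nearest integer is at least C / (max_i |n_i|)^m. -/
set_option maxHeartbeats 2000000

noncomputable def Complex.abs : AbsoluteValue ℂ ℝ :=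
  IsAbsoluteValue.toAbsoluteValue (norm : ℂ → ℝ)

theorem Complex.abs_ofReal (x : ℝ) : Complex.abs (x : ℂ) = |x| := by
  show ‖(x : ℂ)‖ = |x|
  rw [Complex.norm_real, Real.norm_eq_abs]

/-- Let `α₁, …, α_m` be real algebraic integers lying in a real algebraic number field `K` of
degree `m+1` such that `1, α₁, …, α_m` are linearly independent over `ℚ`. Then there is a
constant `C > 0` such that for every nonzero integer vector `(n₁, …, n_m)`, the distance from
`n₁α₁ + ⋯ + n_mα_m` to every integer is at least `C / (max_i |n_i|)^m`. -/
theorem stmt_4 (m : ℕ) (hm : 1 ≤ m) (K : Subfield ℝ)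
    (hfin : FiniteDimensional ℚ K) (hdeg : Module.finrank ℚ K = m + 1)
    (α : Fin m → ℝ) (hmem : ∀ i, α i ∈ K) (hint : ∀ i, IsIntegral ℤ (α i))
    (hli : LinearIndependent ℚ (Fin.cons (1 : ℝ) α : Fin (m + 1) → ℝ)) :
    ∃ C : ℝ, 0 < C ∧ ∀ n : Fin m → ℤ, n ≠ 0 → ∀ z : ℤ,
      C / ((Finset.univ.sup fun i => (n i).natAbs : ℕ) : ℝ) ^ m ≤
        |(∑ i, (n i : ℝ) * α i) - (z : ℝ)| := by
  classical
  haveI := hfin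
  set αK : Fin m → K := fun i => ⟨α i, hmem i⟩ with hαK
  have hintK : ∀ i, IsIntegral ℤ (αK i) := by
    intro i
    have h := hint i
    have he : α i = algebraMap K ℝ (αK i) := rfl
    rw [he] at h
    exact (isIntegral_algebraMap_iff (algebraMap K ℝ).injective).mp h
  -- the embedding of K into ℂ through ℝ
  set σ₀ : K →ₐ[ℚ] ℂ := RingHom.toRatAlgHom (Complex.ofRealHom.comp K.subtype) with hσ₀
  have hσ₀x : ∀ x : K, σ₀ x = ((x : ℝ) : ℂ) := fun x => rfl
  -- bound on conjugates of the α's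
  set c : ℝ := 1 + ∑ σ : K →ₐ[ℚ] ℂ, ∑ i, Complex.abs (σ (αK i)) with hc
  have hsumnonneg : (0:ℝ) ≤ ∑ σ : K →ₐ[ℚ] ℂ, ∑ i, Complex.abs (σ (αK i)) :=
    Finset.sum_nonneg fun σ _ => Finset.sum_nonneg fun i _ => AbsoluteValue.nonneg _ _
  have hc1 : (1 : ℝ) ≤ c := by rw [hc]; linarith
  have hc0 : (0 : ℝ) < c := lt_of_lt_of_le one_pos hc1
  have hcb : ∀ (σ : K →ₐ[ℚ] ℂ) (i : Fin m), Complex.abs (σ (αK i)) ≤ c := by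
    intro σ i
    have h1 : Complex.abs (σ (αK i)) ≤ ∑ j, Complex.abs (σ (αK j)) :=
      Finset.single_le_sum (f := fun j => Complex.abs (σ (αK j))) (fun j _ => AbsoluteValue.nonneg _ _) (Finset.mem_univ i)
    have h2 : ∑ j, Complex.abs (σ (αK j)) ≤
        ∑ τ : K →ₐ[ℚ] ℂ, ∑ j, Complex.abs (τ (αK j)) :=
      Finset.single_le_sum (f := fun τ : K →ₐ[ℚ] ℂ => ∑ j, Complex.abs (τ (αK j))) (fun τ _ => Finset.sum_nonneg fun j _ => AbsoluteValue.nonneg _ _)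
        (Finset.mem_univ σ)
    rw [hc]; linarith
  have hαb : ∀ i, |α i| ≤ c := by
    intro i
    have := hcb σ₀ i
    rwa [hσ₀x, Complex.abs_ofReal] at this
  set B : ℝ := 2 * m * c + 1 with hB
  have hB1 : (1 : ℝ) ≤ B := by
    have hm' : (1:ℝ) ≤ m := by exact_mod_cast hm
    nlinarith
  have hB0 : (0 : ℝ) < B := lt_of_lt_of_le one_pos hB1
  refine ⟨(B ^ m)⁻¹, inv_pos.mpr (pow_pos hB0 m), ?_⟩
  intro n hn z
  set N : ℕ := Finset.univ.sup fun i => (n i).natAbs with hNdef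
  have hN1 : 1 ≤ N := by
    obtain ⟨i, hi⟩ := Function.ne_iff.mp hn
    have : 1 ≤ (n i).natAbs := Int.natAbs_pos.mpr hi
    exact le_trans this (Finset.le_sup (f := fun i => (n i).natAbs) (Finset.mem_univ i))
  have hNr1 : (1 : ℝ) ≤ (N : ℝ) := by exact_mod_cast hN1
  have hNr0 : (0 : ℝ) < (N : ℝ) := lt_of_lt_of_le one_pos hNr1
  have hnb : ∀ i, |(n i : ℝ)| ≤ (N : ℝ) := by
    intro i
    have h1 : (n i).natAbs ≤ N := Finset.le_sup (f := fun i => (n i).natAbs) (Finset.mem_univ i)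
    calc |(n i : ℝ)| = ((n i).natAbs : ℝ) := by
          rw [Nat.cast_natAbs, Int.cast_abs]
      _ ≤ (N : ℝ) := by exact_mod_cast h1
  -- the element β
  set β : K := (∑ i, (n i : K) * αK i) - (z : K) with hβ
  have hβℝ : (β : ℝ) = (∑ i, (n i : ℝ) * α i) - (z : ℝ) := by
    rw [hβ]
    push_cast
    rfl
  -- β is nonzero
  have hβ0 : β ≠ 0 := by
    intro h0
    have hr : (∑ i, (n i : ℝ) * α i) - (z : ℝ) = 0 := by
      rw [← hβℝ, h0]; simp
    have := Fintype.linearIndependent_iff.mp hli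
      (Fin.cons (-(z : ℚ)) (fun i => (n i : ℚ)))
    have hrel : ∑ j : Fin (m+1), (Fin.cons (-(z:ℚ)) (fun i => (n i : ℚ)) : Fin (m+1) → ℚ) j •
        (Fin.cons (1:ℝ) α : Fin (m+1) → ℝ) j = 0 := by
      rw [Fin.sum_univ_succ]
      simp only [Fin.cons_zero, Fin.cons_succ, Rat.smul_def]
      push_cast
      linarith [hr]
    have hall := this hrel
    apply hn
    funext i
    have := hall i.succ
    simp only [Fin.cons_succ] at this
    exact_mod_cast this
  -- β is an algebraic integer
  have hβint : IsIntegral ℤ β := by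
    refine IsIntegral.sub ?_ ?_
    · refine IsIntegral.sum _ fun i _ => IsIntegral.mul ?_ (hintK i)
      have : ((n i : ℤ) : K) = algebraMap ℤ K (n i) := by push_cast; rfl
      rw [this]; exact isIntegral_algebraMap
    · have : ((z : ℤ) : K) = algebraMap ℤ K z := by push_cast; rfl
      rw [this]; exact isIntegral_algebraMap
  -- the norm of β is a nonzero rational integer
  set ν : ℚ := Algebra.norm ℚ β with hν
  have hνint : IsIntegral ℤ ν := Algebra.isIntegral_norm ℚ hβint
  obtain ⟨r, hr⟩ := IsIntegrallyClosed.isIntegral_iff.mp hνint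
  have hν0 : ν ≠ 0 := (Algebra.norm_ne_zero_iff).mpr hβ0
  have hr0 : r ≠ 0 := by rintro rfl; simp at hr; exact hν0 hr.symm
  have hν1 : (1 : ℝ) ≤ |(ν : ℝ)| := by
    have : (1 : ℚ) ≤ |ν| := by
      rw [← hr]
      have : (1 : ℤ) ≤ |r| := Int.one_le_abs hr0
      calc (1:ℚ) ≤ (|r| : ℚ) := by exact_mod_cast this
        _ = |((r : ℚ))| := by push_cast; rfl
        _ = |(algebraMap ℤ ℚ r)| := rfl
    calc (1:ℝ) ≤ ((|ν| : ℚ) : ℝ) := by exact_mod_cast this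
      _ = |(ν : ℝ)| := by push_cast; rfl
  -- norm as product over embeddings
  have hprod : (algebraMap ℚ ℂ) ν = ∏ σ : K →ₐ[ℚ] ℂ, σ β :=
    Algebra.norm_eq_prod_embeddings ℚ ℂ β
  have habsprod : |(ν : ℝ)| = ∏ σ : K →ₐ[ℚ] ℂ, Complex.abs (σ β) := by
    have := congrArg Complex.abs hprod
    rwa [map_prod, show (algebraMap ℚ ℂ) ν = ((ν:ℝ) : ℂ) by push_cast; rfl,
      Complex.abs_ofReal] at this
  have hcard : Fintype.card (K →ₐ[ℚ] ℂ) = m + 1 := by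
    rw [AlgHom.card ℚ K ℂ, hdeg]
  -- split off σ₀
  have hsplit : ∏ σ : K →ₐ[ℚ] ℂ, Complex.abs (σ β) =
      Complex.abs (σ₀ β) * ∏ σ ∈ Finset.univ.erase σ₀, Complex.abs (σ β) :=
    (Finset.mul_prod_erase Finset.univ _ (Finset.mem_univ σ₀)).symm
  have hσ₀β : Complex.abs (σ₀ β) = |(β : ℝ)| := by rw [hσ₀x, Complex.abs_ofReal]
  have hcard' : (Finset.univ.erase σ₀).card = m := by
    rw [Finset.card_erase_of_mem (Finset.mem_univ σ₀), Finset.card_univ, hcard]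
    omega
  -- goal in terms of |(β:ℝ)|
  rw [← hβℝ]
  by_cases hsmall : |(β : ℝ)| < 1
  case neg =>
    push_neg at hsmall
    have h1 : (B ^ m)⁻¹ / (N:ℝ) ^ m ≤ 1 := by
      have hBm : (1:ℝ) ≤ B ^ m := by simpa using pow_le_pow_left₀ (by norm_num : (0:ℝ) ≤ 1) hB1 m
      have hNm : (1:ℝ) ≤ (N:ℝ) ^ m := by simpa using pow_le_pow_left₀ (by norm_num : (0:ℝ) ≤ 1) hNr1 m
      rw [div_le_one (pow_pos hNr0 m)]
      calc (B ^ m)⁻¹ ≤ 1 := inv_le_one_of_one_le₀ hBm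
        _ ≤ (N:ℝ) ^ m := hNm
    linarith
  case pos =>
    -- bound |z|
    have hsum_bound : |∑ i, (n i : ℝ) * α i| ≤ m * c * N := by
      calc |∑ i, (n i : ℝ) * α i| ≤ ∑ i, |(n i : ℝ) * α i| := Finset.abs_sum_le_sum_abs _ _
        _ ≤ ∑ i : Fin m, (N : ℝ) * c := by
            refine Finset.sum_le_sum fun i _ => ?_
            rw [abs_mul]
            exact mul_le_mul (hnb i) (hαb i) (abs_nonneg _) (le_of_lt hNr0)
        _ = m * ((N:ℝ) * c) := by rw [Finset.sum_const, Finset.card_fin, nsmul_eq_mul]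
        _ = m * c * N := by ring
    have hz : |(z : ℝ)| ≤ (m * c + 1) * N := by
      have : |(z : ℝ)| ≤ |∑ i, (n i : ℝ) * α i| + |(β : ℝ)| := by
        have : (z : ℝ) = (∑ i, (n i : ℝ) * α i) - (β : ℝ) := by rw [hβℝ]; ring
        rw [this]
        exact abs_sub _ _
      have hm0 : (0:ℝ) ≤ (m:ℝ) * c := mul_nonneg (Nat.cast_nonneg m) hc0.le
      nlinarith [hsum_bound, hsmall.le]
    -- bound each conjugate
    have hconj : ∀ σ : K →ₐ[ℚ] ℂ, Complex.abs (σ β) ≤ B * N := by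
      intro σ
      have hσβ : σ β = (∑ i, (n i : ℂ) * σ (αK i)) - (z : ℂ) := by
        rw [hβ, map_sub, map_sum]
        congr 1
        · exact Finset.sum_congr rfl fun i _ => by rw [map_mul, map_intCast]
        · rw [map_intCast]
      calc Complex.abs (σ β)
          ≤ Complex.abs (∑ i, (n i : ℂ) * σ (αK i)) + Complex.abs ((z : ℤ) : ℂ) := by
            rw [hσβ]; exact AbsoluteValue.sub_le_add _ _ _
        _ ≤ (∑ i : Fin m, (N:ℝ) * c) + |(z : ℝ)| := by
            gcongr
            · calc Complex.abs (∑ i, (n i : ℂ) * σ (αK i))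
                  ≤ ∑ i, Complex.abs ((n i : ℂ) * σ (αK i)) :=
                    Complex.abs.sum_le _ _
                _ ≤ ∑ i : Fin m, (N:ℝ) * c := by
                    refine Finset.sum_le_sum fun i _ => ?_
                    rw [map_mul]
                    have h1 : Complex.abs ((n i : ℂ)) = |(n i : ℝ)| := by
                      rw [show ((n i : ℤ) : ℂ) = (((n i : ℤ) : ℝ) : ℂ) by push_cast; rfl,
                        Complex.abs_ofReal]
                    rw [h1]
                    exact mul_le_mul (hnb i) (hcb σ i) (AbsoluteValue.nonneg _ _)
                      (le_of_lt hNr0)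
            · rw [show ((z : ℤ) : ℂ) = (((z : ℤ) : ℝ) : ℂ) by push_cast; rfl,
                Complex.abs_ofReal]
        _ = m * c * N + |(z : ℝ)| := by rw [Finset.sum_const, Finset.card_fin, nsmul_eq_mul]; ring
        _ ≤ m * c * N + (m * c + 1) * N := by linarith [hz]
        _ = B * N := by rw [hB]; ring
    -- put everything together
    have hprodbound : ∏ σ ∈ Finset.univ.erase σ₀, Complex.abs (σ β) ≤ (B * N) ^ m := by
      calc ∏ σ ∈ Finset.univ.erase σ₀, Complex.abs (σ β)
          ≤ ∏ _σ ∈ Finset.univ.erase σ₀, (B * (N:ℝ)) := by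
            refine Finset.prod_le_prod (fun σ _ => AbsoluteValue.nonneg _ _)
              (fun σ _ => hconj σ)
        _ = (B * N) ^ m := by rw [Finset.prod_const, hcard']
    have hkey : (1:ℝ) ≤ |(β : ℝ)| * (B * N) ^ m := by
      calc (1:ℝ) ≤ |(ν : ℝ)| := hν1
        _ = Complex.abs (σ₀ β) * ∏ σ ∈ Finset.univ.erase σ₀, Complex.abs (σ β) := by
            rw [habsprod, hsplit]
        _ ≤ |(β : ℝ)| * (B * N) ^ m := by
            rw [hσ₀β]
            exact mul_le_mul_of_nonneg_left hprodbound (abs_nonneg _)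
    have hBN : (0:ℝ) < (B * N) ^ m := pow_pos (mul_pos hB0 hNr0) m
    rw [div_le_iff₀ (pow_pos hNr0 m)]
    rw [mul_pow] at hkey
    have hBm : (0:ℝ) < B ^ m := pow_pos hB0 m
    rw [inv_eq_one_div, div_le_iff₀ hBm]
    calc (1:ℝ) ≤ |(β:ℝ)| * (B^m * (N:ℝ)^m) := hkey
      _ = |(β:ℝ)| * (N:ℝ)^m * B^m := by ring
end

section
/- Let d ≥ 1 and suppose a continuous curve C in the unit cube [0,1)^d gets within distance 1/(6n) of every point of the cube, where n ≥ 2 is an integer. Then the length of C is at least (n^d - 1)·(2/(3n)). -/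
lemma coord_le_dist {d : ℕ} (x y : EuclideanSpace ℝ (Fin d)) (i : Fin d) :
    |x i - y i| ≤ dist x y := by
  rw [EuclideanSpace.dist_eq]
  have h1 : |x i - y i| = Real.sqrt ((x i - y i)^2) := by
    rw [Real.sqrt_sq_eq_abs]
  rw [h1]
  apply Real.sqrt_le_sqrt
  have h2 : (x i - y i)^2 = dist (x i) (y i)^2 := by rw [Real.dist_eq, sq_abs]
  rw [h2]
  exact Finset.single_le_sum (f := fun j => dist (x j) (y j)^2)
    (fun j _ => sq_nonneg _) (Finset.mem_univ i)

/-- If a continuous curve in the unit cube `[0,1)^d` gets within distance `1/(6n)` of every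
point of the cube (`n ≥ 2`), then its length (total variation) is at least
`(n^d - 1)·(2/(3n))`. -/
theorem stmt_5 (d n : ℕ) (hd : 1 ≤ d) (hn : 2 ≤ n)
    (f : ℝ → EuclideanSpace ℝ (Fin d)) (hcont : ContinuousOn f (Set.Icc 0 1))
    (hcube : ∀ t ∈ Set.Icc (0 : ℝ) 1, ∀ i, f t i ∈ Set.Ico (0 : ℝ) 1)
    (hclose : ∀ P : EuclideanSpace ℝ (Fin d), (∀ i, P i ∈ Set.Ico (0 : ℝ) 1) →
      ∃ t ∈ Set.Icc (0 : ℝ) 1, dist (f t) P ≤ 1 / (6 * n)) :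
    ENNReal.ofReal (((n : ℝ) ^ d - 1) * (2 / (3 * n))) ≤ eVariationOn f (Set.Icc 0 1) := by
  have hn0 : (0:ℝ) < n := by positivity
  -- centers
  set P : (Fin d → Fin n) → EuclideanSpace ℝ (Fin d) :=
    fun c => WithLp.toLp 2 (fun i => ((c i : ℝ) + 1/2) / n) with hP
  have hPmem : ∀ c : Fin d → Fin n, ∀ i, P c i ∈ Set.Ico (0:ℝ) 1 := by
    intro c i
    simp only [hP, PiLp.toLp_apply]
    have h1 : ((c i : ℝ)) + 1 ≤ n := by exact_mod_cast (c i).isLt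
    constructor
    · positivity
    · rw [div_lt_one hn0]
      linarith
  choose t ht hdist using fun c => hclose (P c) (hPmem c)
  -- separation
  have hsep : ∀ c c' : Fin d → Fin n, c ≠ c' →
      2/(3*(n:ℝ)) ≤ dist (f (t c)) (f (t c')) := by
    intro c c' hne
    obtain ⟨i, hi⟩ : ∃ i, c i ≠ c' i := Function.ne_iff.mp hne
    have hsepP : 1/(n:ℝ) ≤ dist (P c) (P c') := by
      have h1 : |P c i - P c' i| ≤ dist (P c) (P c') := coord_le_dist _ _ i
      have h2 : (1:ℝ)/n ≤ |P c i - P c' i| := by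
        have : P c i - P c' i = ((c i : ℝ) - (c' i : ℝ)) / n := by
          simp only [hP, PiLp.toLp_apply]; ring
        rw [this, abs_div, abs_of_pos hn0, div_le_div_iff_of_pos_right hn0]
        have hne' : (c i : ℕ) ≠ (c' i : ℕ) := fun h => hi (Fin.ext h)
        have key : ∀ a b : ℕ, a < b → (1:ℝ) ≤ |(a:ℝ) - b| := by
          intro a b hab
          have h5 : (a:ℝ) + 1 ≤ b := by exact_mod_cast hab
          calc (1:ℝ) ≤ (b:ℝ) - a := by linarith
            _ = -((a:ℝ) - b) := by ring
            _ ≤ |(a:ℝ) - b| := neg_le_abs _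
        rcases lt_or_gt_of_ne hne' with h | h
        · exact key _ _ h
        · rw [abs_sub_comm]; exact key _ _ h
      linarith
    have htri : dist (P c) (P c') ≤
        dist (P c) (f (t c)) + dist (f (t c)) (f (t c')) + dist (f (t c')) (P c') :=
      dist_triangle4 _ _ _ _
    have h1 := hdist c
    have h2 := hdist c'
    rw [dist_comm] at h1
    have hx : 1/(6*(n:ℝ)) = 1/(6*n) := rfl
    have : 2/(3*(n:ℝ)) = 1/n - 1/(6*n) - 1/(6*n) := by field_simp; ring
    rw [this]
    have := dist_comm (f (t c')) (P c') ▸ h2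
    linarith
  -- enumeration
  have hcard : Fintype.card (Fin d → Fin n) = n ^ d := by
    simp
  set N := n ^ d with hNdef
  have hN2 : 2 ≤ N := by
    have h1 := (Nat.pow_le_pow_left hn 1).trans (Nat.pow_le_pow_right (by omega : 1 ≤ n) hd)
    simpa [hNdef] using h1
  let e : Fin N ≃ (Fin d → Fin n) := (Fintype.equivFinOfCardEq hcard).symm
  let g : Fin N → ℝ := fun k => t (e k)
  let σ := Tuple.sort g
  have hmono : Monotone (g ∘ σ) := Tuple.monotone_sort g
  have hNpos : 0 < N := by omega
  let idx : ℕ → Fin N := fun j => ⟨min j (N-1), by omega⟩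
  let u : ℕ → ℝ := fun j => g (σ (idx j))
  have humono : Monotone u := by
    intro a b hab
    exact hmono (by simp only [idx, Fin.mk_le_mk]; omega)
  have hus : ∀ j, u j ∈ Set.Icc (0:ℝ) 1 := fun j => ht _
  have key := eVariationOn.sum_le (f := f) (n := N-1) humono hus
  refine le_trans ?_ key
  have hterm : ∀ i ∈ Finset.range (N-1),
      ENNReal.ofReal (2/(3*(n:ℝ))) ≤ edist (f (u (i+1))) (f (u i)) := by
    intro i hi
    rw [Finset.mem_range] at hi
    have hidx1 : idx (i+1) = ⟨i+1, by omega⟩ := by simp only [idx]; congr 1; omega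
    have hidx0 : idx i = ⟨i, by omega⟩ := by simp only [idx]; congr 1; omega
    have hne : e (σ (idx (i+1))) ≠ e (σ (idx i)) := by
      intro h
      have := σ.injective (e.injective h)
      rw [hidx1, hidx0] at this
      exact absurd (Fin.mk.injEq .. ▸ this) (by omega)
    have := hsep _ _ hne
    rw [edist_dist]
    exact ENNReal.ofReal_le_ofReal this
  calc ENNReal.ofReal (((n : ℝ) ^ d - 1) * (2 / (3 * n)))
      = (N-1 : ℕ) * ENNReal.ofReal (2/(3*(n:ℝ))) := by
        rw [← ENNReal.ofReal_natCast, ← ENNReal.ofReal_mul (by positivity)]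
        congr 1
        have : ((N-1 : ℕ) : ℝ) = (n:ℝ)^d - 1 := by
          have : (N:ℝ) = (n:ℝ)^d := by push_cast [hNdef]; ring
          push_cast [Nat.cast_sub (by omega : 1 ≤ N)] at *
          linarith
        rw [this]
    _ = ∑ _i ∈ Finset.range (N-1), ENNReal.ofReal (2/(3*(n:ℝ))) := by
        rw [Finset.sum_const, Finset.card_range, nsmul_eq_mul]
    _ ≤ ∑ i ∈ Finset.range (N-1), edist (f (u (i+1))) (f (u i)) :=
        Finset.sum_le_sum hterm
end
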